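/- For every real m > 1/2, ∑_{n≥1} 1 / (n² (m² + m³)^n binom(3n, n)) = (2/3)·arctan(√((3m−1)/((m+1)(2m−1)²)))² − (1/2)·log(1 + 1/m)². -/

import Mathlib

open Real intervalIntegral Filter Topology

-- Section A: choose lower bound
lemma aux_choose_lb (k : ℕ) : (4:ℝ)^(k+1) ≤ 2*(k+1)*(Nat.choose (3*(k+1)) (k+1)) := by
  have h1 := Nat.four_pow_le_two_mul_self_mul_centralBinom (k+1) (Nat.succ_pos k)
  have h2 : Nat.centralBinom (k+1) ≤ Nat.choose (3*(k+1)) (k+1) := by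
    rw [Nat.centralBinom_eq_two_mul_choose]
    exact Nat.choose_le_choose _ (by omega)
  have : (4:ℕ)^(k+1) ≤ 2*(k+1)*(Nat.choose (3*(k+1)) (k+1)) :=
    h1.trans (Nat.mul_le_mul_left _ h2)
  exact_mod_cast this

-- Section B: Beta integral with nats
lemma beta_nat (b a : ℕ) : ∫ t in (0:ℝ)..1, t^a*(1-t)^b
    = (a.factorial * b.factorial : ℝ)/((a+b+1).factorial) := by
  induction b generalizing a with
  | zero => simp [integral_pow, Nat.factorial]; rw [eq_div_iff (by positivity)]; field_simp
  | succ b IH =>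
    have key : ∫ t in (0:ℝ)..1,
        (((a:ℝ)+1)*(t^a*(1-t)^(b+1)) - ((b:ℝ)+1)*(t^(a+1)*(1-t)^b)) = 0 := by
      have hd : ∀ t : ℝ, HasDerivAt (fun t : ℝ => t^(a+1)*(1-t)^(b+1))
          (((a:ℝ)+1)*(t^a*(1-t)^(b+1)) - ((b:ℝ)+1)*(t^(a+1)*(1-t)^b)) t := by
        intro t
        have h1 : HasDerivAt (fun t : ℝ => t^(a+1)) (((a:ℝ)+1)*t^a) t := by
          simpa using hasDerivAt_pow (a+1) t
        have h2 : HasDerivAt (fun t : ℝ => (1-t)^(b+1))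
            (((b:ℝ)+1)*(1-t)^b*(-1)) t := by
          have hs : HasDerivAt (fun t : ℝ => 1-t) (-1) t := by
            simpa using (hasDerivAt_id t).const_sub 1
          exact (hs.fun_pow (b+1)).congr_deriv (by push_cast; ring)
        have := h1.mul h2
        refine this.congr_deriv (Eq.symm ?_)
        ring
      have hint : IntervalIntegrable (fun t : ℝ =>
          (((a:ℝ)+1)*(t^a*(1-t)^(b+1)) - ((b:ℝ)+1)*(t^(a+1)*(1-t)^b))) MeasureTheory.volume 0 1 :=
        (Continuous.intervalIntegrable (by continuity) _ _)
      have := integral_eq_sub_of_hasDerivAt (fun t _ => hd t) hint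
      simpa using this
    have hint1 : IntervalIntegrable (fun t : ℝ => t^a*(1-t)^(b+1)) MeasureTheory.volume 0 1 :=
      (Continuous.intervalIntegrable (by continuity) _ _)
    have hint2 : IntervalIntegrable (fun t : ℝ => t^(a+1)*(1-t)^b) MeasureTheory.volume 0 1 :=
      (Continuous.intervalIntegrable (by continuity) _ _)
    rw [integral_sub (hint1.const_mul _) (hint2.const_mul _),
      integral_const_mul, integral_const_mul, sub_eq_zero] at key
    have hIH := IH (a+1)
    have ha1 : ((a:ℝ)+1) ≠ 0 := by positivity
    have : (∫ t in (0:ℝ)..1, t^a*(1-t)^(b+1))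
        = (((b:ℝ)+1)/((a:ℝ)+1)) * ((a+1).factorial * b.factorial / ((a+1+b+1).factorial)) := by
      rw [← hIH]
      field_simp at key ⊢
      linarith [key]
    rw [this]
    have e1 : ((a+1).factorial : ℝ) = (a+1) * a.factorial := by
      push_cast [Nat.factorial_succ]; ring
    have e2 : ((b+1).factorial : ℝ) = (b+1) * b.factorial := by
      push_cast [Nat.factorial_succ]; ring
    have e3 : (a+1+b+1) = (a + (b+1) + 1) := by omega
    rw [e1, e3, e2]
    have hf : ((a + (b+1) + 1).factorial : ℝ) ≠ 0 := by positivity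
    field_simp

lemma beta_choose (k : ℕ) : ∫ t in (0:ℝ)..1, t^k*(1-t)^(2*k+2)
    = 1/(((k:ℝ)+1)*(Nat.choose (3*(k+1)) (k+1))) := by
  rw [beta_nat]
  have h3 : (k+1) ≤ 3*(k+1) := by omega
  have hn := Nat.choose_mul_factorial_mul_factorial h3
  have e : 3*(k+1) - (k+1) = 2*k+2 := by omega
  rw [e] at hn
  have e2 : k + (2*k+2) + 1 = 3*(k+1) := by omega
  rw [e2]
  have hfk : (Nat.factorial k : ℝ) ≠ 0 := by positivity
  have hff : (Nat.factorial (2*k+2) : ℝ) ≠ 0 := by positivity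
  have hc : (0:ℝ) < (Nat.choose (3*(k+1)) (k+1) : ℝ) := by
    exact_mod_cast Nat.choose_pos h3
  have hcast : ((3*(k+1)).factorial : ℝ)
      = (Nat.choose (3*(k+1)) (k+1) : ℝ) * ((k+1).factorial) * ((2*k+2).factorial) := by
    exact_mod_cast hn.symm
  rw [hcast]
  have e1 : ((k+1).factorial : ℝ) = (k+1) * k.factorial := by
    push_cast [Nat.factorial_succ]; ring
  rw [e1]
  field_simp

lemma arctan_diff (m : ℝ) (hm : 1/2 < m) :
    Real.arctan ((m+1)/Real.sqrt ((m+1)*(3*m-1))) - Real.arctan ((m-1)/Real.sqrt ((m+1)*(3*m-1)))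
    = Real.arctan (Real.sqrt ((3*m-1)/((m+1)*(2*m-1)^2))) := by
  have h3m : (0:ℝ) < 3*m-1 := by linarith
  have h2m : (0:ℝ) < 2*m-1 := by linarith
  have hm1 : (0:ℝ) < m+1 := by linarith
  have hs2 : (0:ℝ) < (m+1)*(3*m-1) := by positivity
  set s := Real.sqrt ((m+1)*(3*m-1)) with hs_def
  have hs : 0 < s := Real.sqrt_pos.mpr hs2
  have hss : s^2 = (m+1)*(3*m-1) := Real.sq_sqrt hs2.le
  have hxy : ((m+1)/s) * (-((m-1)/s)) < 1 := by
    have h1 : ((m+1)/s) * (-((m-1)/s)) = -((m+1)*(m-1))/s^2 := by ring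
    rw [h1, hss, div_lt_one hs2]
    nlinarith
  have h := Real.arctan_add hxy
  rw [Real.arctan_neg] at h
  have e : ((m+1)/s + -((m-1)/s)) / (1 - ((m+1)/s) * (-((m-1)/s)))
      = (3*m-1)/(s*(2*m-1)) := by
    have h1 : ((m+1)/s) * (-((m-1)/s)) = -((m+1)*(m-1))/s^2 := by ring
    rw [h1, hss]
    rw [div_eq_div_iff]
    · field_simp [h3m.ne', (by linarith : (0:ℝ) < m*3-1).ne']
      ring
    · have : (1:ℝ) - -((m+1)*(m-1))/((m+1)*(3*m-1)) = ((m+1)*(3*m-1)+(m+1)*(m-1))/((m+1)*(3*m-1)) := by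
        field_simp [h3m.ne', (by linarith : (0:ℝ) < m*3-1).ne']
        ring
      rw [this]
      have h4 : (m+1)*(3*m-1)+(m+1)*(m-1) = (m+1)*(4*m-2) := by ring
      rw [h4]
      exact (div_pos (by nlinarith [mul_pos hm1 h2m] : (0:ℝ) < (m+1)*(4*m-2)) hs2).ne'
    · positivity
  rw [e] at h
  have e2 : Real.sqrt ((3*m-1)/((m+1)*(2*m-1)^2)) = (3*m-1)/(s*(2*m-1)) := by
    have hvv : (3*m-1)/((m+1)*(2*m-1)^2) = ((3*m-1)/(s*(2*m-1)))^2 := by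
      rw [div_pow, mul_pow, hss]
      rw [div_eq_div_iff (by positivity) (by positivity)]
      ring
    rw [hvv, Real.sqrt_sq (by positivity)]
  rw [e2]
  linarith [h]

lemma J_eval (m : ℝ) (hm : 1/2 < m) :
    (∫ t in (0:ℝ)..1, (1-t)^2/((m^2+m^3) - t*(1-t)^2))
    = -(Real.log (1+1/m))/(3*m+2)
      + (2*(m+1)/((3*m+2)*Real.sqrt ((m+1)*(3*m-1))))
        * Real.arctan (Real.sqrt ((3*m-1)/((m+1)*(2*m-1)^2))) := by
  have hm0 : (0:ℝ) < m := by linarith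
  have h3m : (0:ℝ) < 3*m-1 := by linarith
  have h2m : (0:ℝ) < 2*m-1 := by linarith
  have hm1 : (0:ℝ) < m+1 := by linarith
  have h32 : (0:ℝ) < 3*m+2 := by linarith
  have hs2 : (0:ℝ) < (m+1)*(3*m-1) := by positivity
  set s := Real.sqrt ((m+1)*(3*m-1)) with hs_def
  have hs : 0 < s := Real.sqrt_pos.mpr hs2
  have hss : s^2 = (m+1)*(3*m-1) := Real.sq_sqrt hs2.le
  have hQ : ∀ t : ℝ, 0 < t^2+(m-1)*t+m^2 := by
    intro t; nlinarith [sq_nonneg (2*t+m-1)]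
  set Φ : ℝ → ℝ := fun t =>
    (-(m/(3*m+2)))*Real.log (1+m-t) + (-((m+1)/(3*m+2)))*Real.log (t^2+(m-1)*t+m^2)
      + (2*(m+1)/((3*m+2)*s))*Real.arctan ((2*t+m-1)/s) with hΦ
  have hderiv : ∀ t ∈ Set.uIcc (0:ℝ) 1,
      HasDerivAt Φ ((1-t)^2/((m^2+m^3) - t*(1-t)^2)) t := by
    intro t ht
    rw [Set.uIcc_of_le (by norm_num : (0:ℝ) ≤ 1)] at ht
    have hlt : 0 < 1+m-t := by
      have := ht.2; linarith
    have hA : HasDerivAt (fun t : ℝ => Real.log (1+m-t)) ((-1)/(1+m-t)) t := by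
      have h0 : HasDerivAt (fun t : ℝ => 1+m-t) (-1) t := by
        simpa using (hasDerivAt_id t).const_sub (1+m)
      exact h0.log (ne_of_gt hlt)
    have hq : HasDerivAt (fun t : ℝ => t^2+(m-1)*t+m^2) (2*t+(m-1)) t := by
      have h1 : HasDerivAt (fun t : ℝ => t^2) (2*t) t := by simpa using hasDerivAt_pow 2 t
      have h2 : HasDerivAt (fun t : ℝ => (m-1)*t) (m-1) t := by
        simpa using (hasDerivAt_id t).const_mul (m-1)
      simpa using (h1.add h2).add_const (m^2)
    have hB : HasDerivAt (fun t : ℝ => Real.log (t^2+(m-1)*t+m^2))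
        ((2*t+(m-1))/(t^2+(m-1)*t+m^2)) t := hq.log (ne_of_gt (hQ t))
    have hin : HasDerivAt (fun t : ℝ => (2*t+m-1)/s) (2/s) t := by
      have h1 : HasDerivAt (fun t : ℝ => 2*t+(m-1)) 2 t := by
        simpa using ((hasDerivAt_id t).const_mul 2).add_const (m-1)
      have h1' : HasDerivAt (fun t : ℝ => 2*t+m-1) 2 t := by
        simpa [add_sub_assoc] using h1
      simpa [div_eq_mul_inv] using h1'.div_const s
    have hC : HasDerivAt (fun t : ℝ => Real.arctan ((2*t+m-1)/s))
        ((1/(1+((2*t+m-1)/s)^2)) * (2/s)) t :=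
      hin.arctan
    have hC' : HasDerivAt (fun t : ℝ => Real.arctan ((2*t+m-1)/s))
        (2*s/(4*(t^2+(m-1)*t+m^2))) t := by
      convert hC using 1
      have hX : (1:ℝ)+((2*t+m-1)/s)^2 = (4*(t^2+(m-1)*t+m^2))/s^2 := by
        rw [div_pow]
        field_simp
        linear_combination hss
      rw [hX, one_div_div, div_mul_div_comm,
        div_eq_div_iff (by nlinarith [hQ t] : (4*(t^2+(m-1)*t+m^2)) ≠ 0)
          (by nlinarith [hQ t, hs, mul_pos (hQ t) hs] : (4*(t^2+(m-1)*t+m^2))*s ≠ 0)]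
      ring
    have h := ((hA.const_mul (-(m/(3*m+2)))).add (hB.const_mul (-((m+1)/(3*m+2))))).add
      (hC'.const_mul (2*(m+1)/((3*m+2)*s)))
    refine h.congr_deriv (Eq.symm ?_)
    have hfac : (m^2+m^3) - t*(1-t)^2 = (1+m-t)*(t^2+(m-1)*t+m^2) := by ring
    rw [hfac]
    field_simp [hs.ne', hlt.ne', (hQ t).ne', h32.ne', (by nlinarith [hQ t] : (0:ℝ) < t*(t+(m-1))+m^2).ne']
    ring
  have hcont : ContinuousOn (fun t : ℝ => (1-t)^2/((m^2+m^3) - t*(1-t)^2))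
      (Set.uIcc (0:ℝ) 1) := by
    apply ContinuousOn.div
    · fun_prop
    · fun_prop
    · intro t ht
      rw [Set.uIcc_of_le (by norm_num : (0:ℝ) ≤ 1)] at ht
      have hlt : 0 < 1+m-t := by have := ht.2; linarith
      have hfac : (m^2+m^3) - t*(1-t)^2 = (1+m-t)*(t^2+(m-1)*t+m^2) := by ring
      rw [hfac]
      exact ne_of_gt (mul_pos hlt (hQ t))
  have hInt := integral_eq_sub_of_hasDerivAt hderiv (hcont.intervalIntegrable)
  rw [hInt, hΦ]
  simp only
  rw [show (1:ℝ)+m-1 = m from by ring,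
    show (1:ℝ)^2+(m-1)*1+m^2 = m*(m+1) from by ring,
    show (2*(1:ℝ)+m-1)/s = (m+1)/s from by ring_nf,
    show (1:ℝ)+m-0 = m+1 from by ring,
    show (0:ℝ)^2+(m-1)*0+m^2 = m^2 from by ring,
    show (2*(0:ℝ)+m-1)/s = (m-1)/s from by ring_nf]
  rw [← arctan_diff m hm]
  rw [Real.log_mul (by positivity) (by positivity), Real.log_pow,
    show (1:ℝ)+1/m = (m+1)/m from by field_simp,
    Real.log_div (by positivity) (by positivity)]
  push_cast
  ring

lemma choose_pos_real (k : ℕ) : (0:ℝ) < (Nat.choose (3*(k+1)) (k+1) : ℝ) := by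
  exact_mod_cast Nat.choose_pos (by omega)

-- geometric-type summability helper
lemma summable_aux (c r : ℝ) (hr0 : 0 ≤ r) (hr : r < 1) :
    Summable (fun n : ℕ => c * r^(n+1)) := by
  have := (summable_geometric_of_lt_one hr0 hr).mul_left (c*r)
  refine this.congr fun n => ?_
  rw [pow_succ]
  ring

lemma p_pos {m : ℝ} (hm : 1/2 < m) : (0:ℝ) < m^2+m^3 := by nlinarith

lemma p_gt {m : ℝ} (hm : 1/2 < m) : (3:ℝ)/8 < m^2+m^3 := by nlinarith

lemma r_lt_one {m : ℝ} (hm : 1/2 < m) : 1/(4*(m^2+m^3)) < 1 := by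
  rw [div_lt_one (by nlinarith [p_pos hm])]
  nlinarith [p_gt hm]

lemma term_le_sq {m : ℝ} (hm : 1/2 < m) (n : ℕ) :
    (1:ℝ)/((n+1)^2*(m^2+m^3)^(n+1)*(Nat.choose (3*(n+1)) (n+1)))
      ≤ 2*(1/(4*(m^2+m^3)))^(n+1) := by
  have hp := p_pos hm
  have hC := choose_pos_real n
  have hn1 : (0:ℝ) < (n:ℝ)+1 := by positivity
  have hb := aux_choose_lb n
  have hkey : (4:ℝ)^(n+1) ≤ 2*((n:ℝ)+1)^2*(Nat.choose (3*(n+1)) (n+1)) := by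
    calc (4:ℝ)^(n+1) ≤ 2*((n:ℝ)+1)*(Nat.choose (3*(n+1)) (n+1)) := hb
    _ ≤ 2*((n:ℝ)+1)^2*(Nat.choose (3*(n+1)) (n+1)) := by nlinarith [hC, hn1, sq_nonneg ((n:ℝ))]
  rw [div_pow, one_pow, mul_pow, mul_one_div,
    div_le_div_iff₀ (by positivity) (by positivity)]
  calc (1:ℝ) * (4^(n+1)*(m^2+m^3)^(n+1))
      = 4^(n+1)*(m^2+m^3)^(n+1) := by ring
    _ ≤ (2*((n:ℝ)+1)^2*(Nat.choose (3*(n+1)) (n+1)))*(m^2+m^3)^(n+1) := by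
        apply mul_le_mul_of_nonneg_right hkey (by positivity)
    _ = 2*((n:ℝ)+1)^2*(m^2+m^3)^(n+1)*(Nat.choose (3*(n+1)) (n+1)) := by ring
    _ = 2*(((n:ℝ)+1)^2*(m^2+m^3)^(n+1)*(Nat.choose (3*(n+1)) (n+1))) := by ring

lemma term_le_lin {m : ℝ} (hm : 1/2 < m) (n : ℕ) :
    (1:ℝ)/((n+1)*(m^2+m^3)^(n+1)*(Nat.choose (3*(n+1)) (n+1)))
      ≤ 2*(1/(4*(m^2+m^3)))^(n+1) := by
  have hp := p_pos hm
  have hC := choose_pos_real n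
  have hb := aux_choose_lb n
  rw [div_pow, one_pow, mul_pow, mul_one_div,
    div_le_div_iff₀ (by positivity) (by positivity)]
  calc (1:ℝ) * (4^(n+1)*(m^2+m^3)^(n+1))
      = 4^(n+1)*(m^2+m^3)^(n+1) := by ring
    _ ≤ (2*((n:ℝ)+1)*(Nat.choose (3*(n+1)) (n+1)))*(m^2+m^3)^(n+1) := by
        apply mul_le_mul_of_nonneg_right hb (by positivity)
    _ = 2*(((n:ℝ)+1)*(m^2+m^3)^(n+1)*(Nat.choose (3*(n+1)) (n+1))) := by ring

lemma summable_main {m : ℝ} (hm : 1/2 < m) :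
    Summable (fun n : ℕ =>
      (1:ℝ)/((n+1)^2*(m^2+m^3)^(n+1)*(Nat.choose (3*(n+1)) (n+1)))) := by
  apply Summable.of_nonneg_of_le (fun n => by positivity) (term_le_sq hm)
  exact summable_aux 2 _ (by have := p_pos hm; positivity) (r_lt_one hm)

lemma summable_D {m : ℝ} (hm : 1/2 < m) :
    Summable (fun n : ℕ =>
      (1:ℝ)/((n+1)*(m^2+m^3)^(n+1)*(Nat.choose (3*(n+1)) (n+1)))) := by
  apply Summable.of_nonneg_of_le (fun n => by positivity) (term_le_lin hm)
  exact summable_aux 2 _ (by have := p_pos hm; positivity) (r_lt_one hm)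

lemma cubic_bound {t : ℝ} (h0 : 0 ≤ t) (h1 : t ≤ 1) : t*(1-t)^2 ≤ 4/27 := by
  nlinarith [sq_nonneg (3*t-1), sq_nonneg (1-t)]

lemma D_eq_J {m : ℝ} (hm : 1/2 < m) :
    (∑' n : ℕ, (1:ℝ)/((n+1)*(m^2+m^3)^(n+1)*(Nat.choose (3*(n+1)) (n+1))))
    = ∫ t in (0:ℝ)..1, (1-t)^2/((m^2+m^3) - t*(1-t)^2) := by
  have hp := p_pos hm
  have hp38 := p_gt hm
  set p := m^2+m^3 with hpdef
  -- each term equals an integral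
  have hterm : ∀ n : ℕ, (1:ℝ)/((n+1)*p^(n+1)*(Nat.choose (3*(n+1)) (n+1)))
      = ∫ t in (0:ℝ)..1, t^n*(1-t)^(2*n+2)/p^(n+1) := by
    intro n
    rw [intervalIntegral.integral_div, beta_choose n]
    rw [div_div]
    congr 1
    ring
  -- partial sums
  have hFint : ∀ n : ℕ, IntervalIntegrable (fun t : ℝ => t^n*(1-t)^(2*n+2)/p^(n+1))
      MeasureTheory.volume 0 1 := by
    intro n
    apply Continuous.intervalIntegrable
    fun_prop (disch := positivity)
  have hpartial : ∀ N : ℕ,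
      (∑ n ∈ Finset.range N, (1:ℝ)/((n+1)*p^(n+1)*(Nat.choose (3*(n+1)) (n+1))))
      = ∫ t in (0:ℝ)..1, (∑ n ∈ Finset.range N, t^n*(1-t)^(2*n+2)/p^(n+1)) := by
    intro N
    rw [intervalIntegral.integral_finset_sum (fun n _ => hFint n)]
    exact Finset.sum_congr rfl (fun n _ => hterm n)
  -- pointwise limit on (0,1]
  have hW : ∀ t : ℝ, 0 ≤ t → t ≤ 1 →
      HasSum (fun n : ℕ => t^n*(1-t)^(2*n+2)/p^(n+1))
        ((1-t)^2/(p - t*(1-t)^2)) := by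
    intro t ht0 ht1
    have hrt0 : 0 ≤ t*(1-t)^2/p := by positivity
    have hrt1 : t*(1-t)^2/p < 1 := by
      rw [div_lt_one hp]
      calc t*(1-t)^2 ≤ 4/27 := cubic_bound ht0 ht1
        _ < 3/8 := by norm_num
        _ < p := hp38
    have hgeo := (hasSum_geometric_of_lt_one hrt0 hrt1).mul_left ((1-t)^2/p)
    have he : ∀ n : ℕ, (1-t)^2/p * (t*(1-t)^2/p)^n = t^n*(1-t)^(2*n+2)/p^(n+1) := by
      intro n
      rw [div_pow, mul_pow, div_mul_div_comm, ← pow_succ']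
      congr 1
      rw [← pow_mul, pow_add]
      ring
    have hval : (1-t)^2/p * (1 - t*(1-t)^2/p)⁻¹ = (1-t)^2/(p - t*(1-t)^2) := by
      rw [← div_eq_mul_inv, div_div]
      congr 1
      field_simp
    rw [← hval]
    exact hgeo.congr_fun (fun n => (he n).symm)
  -- dominated convergence
  set ν : ℝ := 4/(27*p) with hν
  have hν0 : 0 ≤ ν := by positivity
  have hν1 : ν < 1 := by
    rw [hν, div_lt_one (by positivity)]
    nlinarith
  set M : ℝ := (1/p) * (1-ν)⁻¹ with hM
  have htend : Tendsto (fun N => ∫ t in (0:ℝ)..1,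
        (∑ n ∈ Finset.range N, t^n*(1-t)^(2*n+2)/p^(n+1))) atTop
      (𝓝 (∫ t in (0:ℝ)..1, (1-t)^2/(p - t*(1-t)^2))) := by
    apply intervalIntegral.tendsto_integral_filter_of_dominated_convergence (fun _ => M)
    · filter_upwards with N
      apply Continuous.aestronglyMeasurable
      fun_prop (disch := positivity)
    · filter_upwards with N
      filter_upwards with t ht
      rw [Set.uIoc_of_le (by norm_num : (0:ℝ) ≤ 1)] at ht
      have ht0 : 0 ≤ t := ht.1.le
      have ht1 : t ≤ 1 := ht.2
      have hnn : ∀ n : ℕ, 0 ≤ t^n*(1-t)^(2*n+2)/p^(n+1) := by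
        intro n
        have h1t : 0 ≤ 1 - t := by linarith
        positivity
      rw [Real.norm_of_nonneg (Finset.sum_nonneg fun n _ => hnn n)]
      have hle : ∀ n : ℕ, t^n*(1-t)^(2*n+2)/p^(n+1) ≤ (1/p)*ν^n := by
        intro n
        have h1t : 0 ≤ 1 - t := by linarith
        have e1 : t^n*(1-t)^(2*n+2)/p^(n+1) = (t*(1-t)^2)^n * ((1-t)^2/p^(n+1)) := by
          rw [mul_pow, ← pow_mul, pow_add]
          ring
        have e2 : (t*(1-t)^2)^n ≤ (4/27)^n := by
          apply pow_le_pow_left₀ (by positivity) (cubic_bound ht0 ht1)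
        calc t^n*(1-t)^(2*n+2)/p^(n+1) = (t*(1-t)^2)^n * ((1-t)^2/p^(n+1)) := e1
          _ ≤ (4/27)^n * (1/p^(n+1)) := by
              apply mul_le_mul e2 _ (by positivity) (by positivity)
              rw [div_le_div_iff₀ (by positivity) (by positivity)]
              apply mul_le_mul_of_nonneg_right _ (pow_pos hp (n+1)).le
              nlinarith [mul_nonneg ht0 (show (0:ℝ) ≤ 2-t by linarith)]
          _ = (1/p)*ν^n := by
              rw [hν, div_pow, div_pow, pow_succ, mul_pow]
              field_simp
      calc (∑ n ∈ Finset.range N, t^n*(1-t)^(2*n+2)/p^(n+1))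
          ≤ ∑ n ∈ Finset.range N, (1/p)*ν^n := Finset.sum_le_sum (fun n _ => hle n)
        _ ≤ ∑' n : ℕ, (1/p)*ν^n := by
            apply Summable.sum_le_tsum _ (fun n _ => by positivity)
            exact (summable_geometric_of_lt_one hν0 hν1).mul_left _
        _ = M := by
            rw [tsum_mul_left, tsum_geometric_of_lt_one hν0 hν1, hM]
    · exact intervalIntegrable_const
    · filter_upwards with t ht
      rw [Set.uIoc_of_le (by norm_num : (0:ℝ) ≤ 1)] at ht
      exact (hW t ht.1.le ht.2).tendsto_sum_nat
  have htsum := (summable_D hm).hasSum.tendsto_sum_nat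
  rw [funext hpartial] at htsum
  exact tendsto_nhds_unique htsum htend

lemma hasDerivAt_S {m : ℝ} (hm : 1/2 < m) :
    HasDerivAt (fun y : ℝ => ∑' n : ℕ,
        (1:ℝ)/((n+1)^2*(y^2+y^3)^(n+1)*(Nat.choose (3*(n+1)) (n+1))))
      (-((2*m+3*m^2)/(m^2+m^3)) *
        ∑' n : ℕ, (1:ℝ)/((n+1)*(m^2+m^3)^(n+1)*(Nat.choose (3*(n+1)) (n+1)))) m := by
  obtain ⟨a, ha1, ham⟩ : ∃ a : ℝ, 1/2 < a ∧ a < m := ⟨(1/2+m)/2, by linarith, by linarith⟩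
  set b : ℝ := m+1 with hb
  have hmb : m < b := by simp [hb]
  have ha0 : (0:ℝ) < a := by linarith
  set pa : ℝ := a^2+a^3 with hpa
  have hpa0 : (0:ℝ) < pa := p_pos ha1
  have hpa38 : (3:ℝ)/8 < pa := p_gt ha1
  -- the functions and their derivatives
  set g' : ℕ → ℝ → ℝ := fun n y =>
    -(2*y+3*y^2)/(((n:ℝ)+1)*(y^2+y^3)^(n+2)*(Nat.choose (3*(n+1)) (n+1))) with hg'
  have hderiv : ∀ n : ℕ, ∀ y ∈ Set.Ioo a b,
      HasDerivAt (fun y : ℝ =>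
        (1:ℝ)/((n+1)^2*(y^2+y^3)^(n+1)*(Nat.choose (3*(n+1)) (n+1)))) (g' n y) y := by
    intro n y hy
    have hy0 : 0 < y := lt_trans ha0 hy.1
    have hpy : (0:ℝ) < y^2+y^3 := by positivity
    have hC := choose_pos_real n
    have hp1 : HasDerivAt (fun y : ℝ => y^2+y^3) (2*y+3*y^2) y := by
      have h1 : HasDerivAt (fun y : ℝ => y^2) (2*y) y := by simpa using hasDerivAt_pow 2 y
      have h2 : HasDerivAt (fun y : ℝ => y^3) (3*y^2) y := by simpa using hasDerivAt_pow 3 y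
      exact h1.add h2
    have hpow := hp1.pow (n+1)
    have h1 : HasDerivAt (fun y : ℝ =>
        ((n:ℝ)+1)^2*(y^2+y^3)^(n+1)*(Nat.choose (3*(n+1)) (n+1)))
        ((((n:ℝ)+1)^2*((((n:ℝ)+1))*(y^2+y^3)^n*(2*y+3*y^2)))*(Nat.choose (3*(n+1)) (n+1))) y := by
      have := (hpow.const_mul (((n:ℝ)+1)^2)).mul_const
        ((Nat.choose (3*(n+1)) (n+1) : ℝ))
      refine this.congr_deriv (Eq.symm ?_)
      push_cast
      ring
    have hne : ((n:ℝ)+1)^2*(y^2+y^3)^(n+1)*(Nat.choose (3*(n+1)) (n+1)) ≠ 0 := by positivity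
    have h2 := h1.inv hne
    have heq : (fun y : ℝ =>
        (1:ℝ)/((n+1)^2*(y^2+y^3)^(n+1)*(Nat.choose (3*(n+1)) (n+1))))
        = (fun y : ℝ => (((n:ℝ)+1)^2*(y^2+y^3)^(n+1)*(Nat.choose (3*(n+1)) (n+1)))⁻¹) := by
      funext z
      rw [one_div]
    rw [heq]
    refine h2.congr_deriv (Eq.symm ?_)
    rw [hg']
    rw [div_eq_div_iff (by positivity) (by positivity)]
    ring
  -- the uniform bound
  set u : ℕ → ℝ := fun n => (2*(2*b+3*b^2)/pa) * (1/(4*pa))^(n+1) with hu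
  have hu_sum : Summable u := by
    apply summable_aux
    · positivity
    · rw [div_lt_one (by positivity)]; nlinarith
  have hbound : ∀ n : ℕ, ∀ y ∈ Set.Ioo a b, ‖g' n y‖ ≤ u n := by
    intro n y hy
    have hy0 : 0 < y := lt_trans ha0 hy.1
    have hya : a ≤ y := hy.1.le
    have hyb : y ≤ b := hy.2.le
    have hpy : (0:ℝ) < y^2+y^3 := by positivity
    have hC := choose_pos_real n
    have hb0 : (0:ℝ) < b := by linarith
    rw [hg', hu]
    simp only [norm_div, norm_neg]
    have hnum0 : (0:ℝ) ≤ 2*y+3*y^2 := by positivity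
    have hden0 : (0:ℝ) < ((n:ℝ)+1)*(y^2+y^3)^(n+2)*(Nat.choose (3*(n+1)) (n+1)) := by positivity
    rw [Real.norm_of_nonneg hnum0, Real.norm_of_nonneg hden0.le]
    have e : (2*(2*b+3*b^2)/pa) * (1/(4*pa))^(n+1) = 2*(2*b+3*b^2)/(4^(n+1)*pa^(n+2)) := by
      rw [div_pow, one_pow, mul_pow, div_mul_div_comm]
      ring
    rw [e, div_le_div_iff₀ hden0 (by positivity)]
    have key1 : (2*y+3*y^2) ≤ 2*b+3*b^2 := by nlinarith
    have key2 : pa^(n+2) ≤ (y^2+y^3)^(n+2) := by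
      apply pow_le_pow_left₀ hpa0.le
      have h2 : a^2 ≤ y^2 := by nlinarith
      have h3 : a^3 ≤ y^3 := by nlinarith
      rw [hpa]; linarith
    have key3 : (4:ℝ)^(n+1) ≤ 2*(((n:ℝ)+1)*(Nat.choose (3*(n+1)) (n+1))) := by
      have := aux_choose_lb n
      calc (4:ℝ)^(n+1) ≤ 2*((n:ℝ)+1)*(Nat.choose (3*(n+1)) (n+1)) := this
        _ = 2*(((n:ℝ)+1)*(Nat.choose (3*(n+1)) (n+1))) := by ring
    calc (2*y+3*y^2)*(4^(n+1)*pa^(n+2))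
        ≤ (2*b+3*b^2)*(4^(n+1)*pa^(n+2)) := by
          apply mul_le_mul_of_nonneg_right key1 (by positivity)
      _ ≤ (2*b+3*b^2)*((2*(((n:ℝ)+1)*(Nat.choose (3*(n+1)) (n+1))))*pa^(n+2)) := by
          have h0 : (0:ℝ) ≤ 2*b+3*b^2 := by positivity
          have h1 : (4:ℝ)^(n+1)*pa^(n+2)
              ≤ (2*(((n:ℝ)+1)*(Nat.choose (3*(n+1)) (n+1))))*pa^(n+2) :=
            mul_le_mul_of_nonneg_right key3 (by positivity)
          exact mul_le_mul_of_nonneg_left h1 h0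
      _ ≤ (2*b+3*b^2)*((2*(((n:ℝ)+1)*(Nat.choose (3*(n+1)) (n+1))))*(y^2+y^3)^(n+2)) := by
          have h0 : (0:ℝ) ≤ 2*b+3*b^2 := by positivity
          have h1 : (2*(((n:ℝ)+1)*(Nat.choose (3*(n+1)) (n+1))))*pa^(n+2)
              ≤ (2*(((n:ℝ)+1)*(Nat.choose (3*(n+1)) (n+1))))*(y^2+y^3)^(n+2) :=
            mul_le_mul_of_nonneg_left key2 (by positivity)
          exact mul_le_mul_of_nonneg_left h1 h0
      _ = 2*(2*b+3*b^2)*(((n:ℝ)+1)*(y^2+y^3)^(n+2)*(Nat.choose (3*(n+1)) (n+1))) := by ring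
  -- apply the tsum derivative theorem
  have hmem : m ∈ Set.Ioo a b := ⟨ham, hmb⟩
  have hmain := hasDerivAt_tsum_of_isPreconnected hu_sum isOpen_Ioo
    (convex_Ioo a b).isPreconnected hderiv hbound hmem (summable_main hm) hmem
  refine hmain.congr_deriv (Eq.symm ?_)
  -- identify the derivative value
  have hp := p_pos hm
  have he : ∀ n : ℕ, g' n m
      = (-((2*m+3*m^2)/(m^2+m^3))) * ((1:ℝ)/((n+1)*(m^2+m^3)^(n+1)*(Nat.choose (3*(n+1)) (n+1)))) := by
    intro n
    simp only [hg']
    have hC := choose_pos_real n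
    field_simp
    ring_nf
    try exact Or.inl trivial
    try tauto
  have : (∑' n : ℕ, g' n m)
      = (-((2*m+3*m^2)/(m^2+m^3))) *
        ∑' n : ℕ, (1:ℝ)/((n+1)*(m^2+m^3)^(n+1)*(Nat.choose (3*(n+1)) (n+1))) := by
    rw [tsum_congr he]
    exact tsum_mul_left
  exact this.symm

lemma hasDerivAt_R {m : ℝ} (hm : 1/2 < m) :
    HasDerivAt (fun y : ℝ => (2/3)*Real.arctan (Real.sqrt ((3*y-1)/((y+1)*(2*y-1)^2)))^2
        - (1/2)*Real.log (1+1/y)^2)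
      (-((2*m+3*m^2)/(m^2+m^3)) * (-(Real.log (1+1/m))/(3*m+2)
        + (2*(m+1)/((3*m+2)*Real.sqrt ((m+1)*(3*m-1))))
          * Real.arctan (Real.sqrt ((3*m-1)/((m+1)*(2*m-1)^2))))) m := by
  have hm0 : (0:ℝ) < m := by linarith
  have h3m : (0:ℝ) < 3*m-1 := by linarith
  have h2m : (0:ℝ) < 2*m-1 := by linarith
  have hm1 : (0:ℝ) < m+1 := by linarith
  have h32 : (0:ℝ) < 3*m+2 := by linarith
  have hp : (0:ℝ) < m^2+m^3 := by positivity
  have hW : (0:ℝ) < (m+1)*(2*m-1)^2 := by positivity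
  have hv0 : (0:ℝ) < (3*m-1)/((m+1)*(2*m-1)^2) := by positivity
  have hs2 : (0:ℝ) < (m+1)*(3*m-1) := by positivity
  set v : ℝ := (3*m-1)/((m+1)*(2*m-1)^2) with hvdef
  set u : ℝ := Real.sqrt v with hudef
  have hu0 : 0 < u := Real.sqrt_pos.mpr hv0
  have huv : u^2 = v := Real.sq_sqrt hv0.le
  set s : ℝ := Real.sqrt ((m+1)*(3*m-1)) with hsdef
  have hs0 : 0 < s := Real.sqrt_pos.mpr hs2
  have hss : s^2 = (m+1)*(3*m-1) := Real.sq_sqrt hs2.le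
  have key : s = u*((2*m-1)*(m+1)) := by
    have h1 : s^2 = (u*((2*m-1)*(m+1)))^2 := by
      rw [hss, mul_pow, huv, hvdef]
      field_simp [h2m.ne', (by linarith : (0:ℝ) < m*2-1).ne']
    have h2 : 0 ≤ u*((2*m-1)*(m+1)) := by positivity
    rw [← Real.sqrt_sq hs0.le, h1, Real.sqrt_sq h2]
  -- derivative of v
  have hnum : HasDerivAt (fun y : ℝ => 3*y-1) 3 m := by
    simpa using ((hasDerivAt_id m).const_mul 3).sub_const 1
  have hsq : HasDerivAt (fun y : ℝ => (2*y-1)^2) (2*(2*m-1)*2) m := by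
    have h1 : HasDerivAt (fun y : ℝ => 2*y-1) 2 m := by
      simpa using ((hasDerivAt_id m).const_mul 2).sub_const 1
    exact (h1.fun_pow 2).congr_deriv (by push_cast; ring)
  have hden : HasDerivAt (fun y : ℝ => (y+1)*(2*y-1)^2)
      (1*(2*m-1)^2 + (m+1)*(2*(2*m-1)*2)) m := by
    exact ((hasDerivAt_id m).add_const 1).mul hsq
  have hv' : HasDerivAt (fun y : ℝ => (3*y-1)/((y+1)*(2*y-1)^2))
      ((3*((m+1)*(2*m-1)^2) - (3*m-1)*(1*(2*m-1)^2 + (m+1)*(2*(2*m-1)*2)))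
        /((m+1)*(2*m-1)^2)^2) m := hnum.div hden hW.ne'
  have hu' : HasDerivAt (fun y : ℝ => Real.sqrt ((3*y-1)/((y+1)*(2*y-1)^2)))
      ((3*((m+1)*(2*m-1)^2) - (3*m-1)*(1*(2*m-1)^2 + (m+1)*(2*(2*m-1)*2)))
        /((m+1)*(2*m-1)^2)^2 / (2*u)) m := by
    have := hv'.sqrt (by rw [← hvdef]; exact hv0.ne')
    rw [← hvdef, ← hudef] at this
    exact this
  have hat : HasDerivAt (fun y : ℝ => Real.arctan (Real.sqrt ((3*y-1)/((y+1)*(2*y-1)^2))))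
      (1/(1+u^2) * ((3*((m+1)*(2*m-1)^2) - (3*m-1)*(1*(2*m-1)^2 + (m+1)*(2*(2*m-1)*2)))
        /((m+1)*(2*m-1)^2)^2 / (2*u))) m := by
    have := hu'.arctan
    rw [← hvdef, ← hudef] at this
    exact this
  have hat2 := (hat.pow 2).const_mul ((2:ℝ)/3)
  -- log part
  have hinv : HasDerivAt (fun y : ℝ => 1+1/y) (-(1/m^2)) m := by
    have h1 : HasDerivAt (fun y : ℝ => y⁻¹) (-(m^2)⁻¹) m := hasDerivAt_inv hm0.ne'
    have h2 := h1.const_add 1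
    simpa [one_div] using h2
  have h1m : (0:ℝ) < 1+1/m := by positivity
  have hlog : HasDerivAt (fun y : ℝ => Real.log (1+1/y)) ((-(1/m^2))/(1+1/m)) m :=
    hinv.log h1m.ne'
  have hlog2 := (hlog.pow 2).const_mul ((1:ℝ)/2)
  have hfull := hat2.sub hlog2
  refine hfull.congr_deriv (Eq.symm ?_)
  rw [← hudef, huv]
  rw [key]
  have hv1 : 1 + v = 4*m^3/((m+1)*(2*m-1)^2) := by
    rw [hvdef]
    field_simp [(by linarith : (0:ℝ) < m*2-1).ne']
    ring
  rw [hv1]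
  field_simp
  ring

lemma inv_sq_tendsto : Tendsto (fun m : ℝ => (m^2)⁻¹) atTop (𝓝 0) :=
  (tendsto_pow_atTop (by norm_num : 2 ≠ 0)).inv_tendsto_atTop

lemma S_tendsto : Tendsto (fun m : ℝ => ∑' n : ℕ,
    (1:ℝ)/((n+1)^2*(m^2+m^3)^(n+1)*(Nat.choose (3*(n+1)) (n+1)))) atTop (𝓝 0) := by
  apply squeeze_zero' (g := fun m : ℝ => (4/7)*(m^2)⁻¹)
  · filter_upwards [eventually_ge_atTop (1:ℝ)] with m hm1
    have hm : 1/2 < m := by linarith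
    have hp := p_pos hm
    exact tsum_nonneg (fun n => by positivity)
  · filter_upwards [eventually_ge_atTop (1:ℝ)] with m hm1
    have hm : 1/2 < m := by linarith
    have hp := p_pos hm
    have hp2 : (2:ℝ) ≤ m^2+m^3 := by nlinarith
    set r : ℝ := 1/(4*(m^2+m^3)) with hr
    have hr0 : 0 ≤ r := by positivity
    have hr8 : r ≤ 1/8 := by
      rw [hr, div_le_div_iff₀ (by positivity) (by norm_num)]
      nlinarith
    have hr1 : r < 1 := r_lt_one hm
    calc (∑' n : ℕ, (1:ℝ)/((n+1)^2*(m^2+m^3)^(n+1)*(Nat.choose (3*(n+1)) (n+1))))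
        ≤ ∑' n : ℕ, 2*r^(n+1) := by
          apply Summable.tsum_le_tsum (term_le_sq hm) (summable_main hm) (summable_aux 2 r hr0 hr1)
      _ = (2*r) * ∑' n : ℕ, r^n := by
          rw [← tsum_mul_left]
          exact tsum_congr (fun n => by rw [pow_succ]; ring)
      _ = (2*r) * (1-r)⁻¹ := by rw [tsum_geometric_of_lt_one hr0 hr1]
      _ ≤ (2*r) * (8/7) := by
          apply mul_le_mul_of_nonneg_left _ (by positivity)
          calc (1-r)⁻¹ ≤ (7/8 : ℝ)⁻¹ := by
                apply inv_anti₀ (by norm_num)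
                linarith
            _ = 8/7 := by norm_num
      _ ≤ (4/7)*(m^2)⁻¹ := by
          rw [hr]
          have e : 2*(1/(4*(m^2+m^3)))*(8/7) = 4/(7*(m^2+m^3)) := by
            field_simp
            ring
          have e2 : (4/7)*(m^2)⁻¹ = 4/(7*m^2) := by
            field_simp
          rw [e, e2, div_le_div_iff₀ (by positivity) (by positivity)]
          nlinarith [pow_pos (show (0:ℝ) < m by linarith) 3]
  · have := inv_sq_tendsto.const_mul ((4:ℝ)/7)
    simpa using this

lemma R_tendsto : Tendsto (fun m : ℝ =>
    (2/3)*Real.arctan (Real.sqrt ((3*m-1)/((m+1)*(2*m-1)^2)))^2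
      - (1/2)*Real.log (1+1/m)^2) atTop (𝓝 0) := by
  have hv : Tendsto (fun m : ℝ => (3*m-1)/((m+1)*(2*m-1)^2)) atTop (𝓝 0) := by
    apply squeeze_zero' (g := fun m : ℝ => 3*(m^2)⁻¹)
    · filter_upwards [eventually_ge_atTop (1:ℝ)] with m hm1
      have h1 : (0:ℝ) < 3*m-1 := by linarith
      have h2 : (0:ℝ) < 2*m-1 := by linarith
      have h3 : (0:ℝ) < m+1 := by linarith
      positivity
    · filter_upwards [eventually_ge_atTop (1:ℝ)] with m hm1
      have h2 : (0:ℝ) < 2*m-1 := by linarith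
      have h3 : (0:ℝ) < m+1 := by linarith
      have hm0 : (0:ℝ) < m := by linarith
      have hinv : 3*(m^2)⁻¹ = 3/m^2 := by ring
      rw [div_le_iff₀ (by positivity), hinv, div_mul_eq_mul_div, le_div_iff₀ (by positivity)]
      nlinarith [mul_nonneg (mul_nonneg hm0.le (by linarith : (0:ℝ) ≤ m-1))
        (by linarith : (0:ℝ) ≤ m+1)]
    · simpa using inv_sq_tendsto.const_mul (3:ℝ)
  have hsqrt : Tendsto (fun m : ℝ => Real.sqrt ((3*m-1)/((m+1)*(2*m-1)^2))) atTop (𝓝 0) := by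
    have := (Real.continuous_sqrt.tendsto 0).comp hv
    simpa [Function.comp_def] using this
  have hat : Tendsto (fun m : ℝ => Real.arctan (Real.sqrt ((3*m-1)/((m+1)*(2*m-1)^2))))
      atTop (𝓝 0) := by
    have := (Real.continuous_arctan.tendsto 0).comp hsqrt
    simpa [Function.comp_def] using this
  have hlog : Tendsto (fun m : ℝ => Real.log (1+1/m)) atTop (𝓝 0) := by
    have h1 : Tendsto (fun m : ℝ => 1+1/m) atTop (𝓝 1) := by
      have := tendsto_inv_atTop_zero (𝕜 := ℝ)
      have h2 := this.const_add (1:ℝ)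
      simpa [one_div] using h2
    have := ((Real.continuousAt_log (by norm_num : (1:ℝ) ≠ 0)).tendsto).comp h1
    simpa [Function.comp_def] using this
  have h1 := ((hat.pow 2).const_mul ((2:ℝ)/3)).sub ((hlog.pow 2).const_mul ((1:ℝ)/2))
  simpa using h1

theorem stmt_11 (m : ℝ) (hm : 1 / 2 < m) :
    ∑' n : ℕ,
        (1 : ℝ) /
          ((n + 1) ^ 2 * (m ^ 2 + m ^ 3) ^ (n + 1) *
            (Nat.choose (3 * (n + 1)) (n + 1))) =
      (2 / 3) *
          Real.arctan (Real.sqrt ((3 * m - 1) / ((m + 1) * (2 * m - 1) ^ 2))) ^ 2 -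
        (1 / 2) * Real.log (1 + 1 / m) ^ 2 := by
  set F : ℝ → ℝ := fun y =>
    (∑' n : ℕ, (1:ℝ)/((n+1)^2*(y^2+y^3)^(n+1)*(Nat.choose (3*(n+1)) (n+1))))
      - ((2/3)*Real.arctan (Real.sqrt ((3*y-1)/((y+1)*(2*y-1)^2)))^2
        - (1/2)*Real.log (1+1/y)^2) with hFdef
  have hF' : ∀ y : ℝ, 1/2 < y → HasDerivAt F 0 y := by
    intro y hy
    have h1 := hasDerivAt_S hy
    have h3 : (∑' n : ℕ, (1:ℝ)/((n+1)*(y^2+y^3)^(n+1)*(Nat.choose (3*(n+1)) (n+1))))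
        = -(Real.log (1+1/y))/(3*y+2)
          + (2*(y+1)/((3*y+2)*Real.sqrt ((y+1)*(3*y-1))))
            * Real.arctan (Real.sqrt ((3*y-1)/((y+1)*(2*y-1)^2))) :=
      (D_eq_J hy).trans (J_eval y hy)
    rw [h3] at h1
    have h2 := hasDerivAt_R hy
    have h4 := h1.sub h2
    rw [sub_self] at h4
    exact h4
  have hconst : ∀ b : ℝ, m ≤ b → F b = F m := by
    intro b hb
    have hc : ContinuousOn F (Set.Icc m b) := fun y hy =>
      (hF' y (lt_of_lt_of_le hm hy.1)).continuousAt.continuousWithinAt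
    have hd : ∀ y ∈ Set.Ico m b, HasDerivWithinAt F 0 (Set.Ici y) y := fun y hy =>
      (hF' y (lt_of_lt_of_le hm hy.1)).hasDerivWithinAt
    exact constant_of_has_deriv_right_zero hc hd b (Set.right_mem_Icc.mpr hb)
  have hlim : Tendsto F atTop (𝓝 0) := by
    have h0 := S_tendsto.sub R_tendsto
    simp only [sub_zero] at h0
    exact h0
  have heven : ∀ᶠ b in atTop, F b = F m := by
    filter_upwards [eventually_ge_atTop m] with b hb
    exact hconst b hb
  have h2 : Tendsto F atTop (𝓝 (F m)) := by
    apply Tendsto.congr' _ tendsto_const_nhds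
    filter_upwards [heven] with b hb
    exact hb.symm
  have hFm : F m = 0 := tendsto_nhds_unique h2 hlim
  have := hFm
  rw [hFdef] at this
  simp only [sub_eq_zero] at this
  exact this
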